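/- arXiv:1004.3165 — 5 statements merged into one kernel-verified Lean document; each statement's English description precedes it below -/
import Mathlib

section
/- Let n be an even positive integer. Let X be uniform on {0,1}^n, K uniform on [n] independent of X, and M⁰ a random variable on a finite set jointly distributed with (X,K); write M(x; x[1,k]) for the conditional law of M⁰ given (X,K) = (x,k), and set c = I(K : M⁰ | X). Let J be uniform on [n/2] and L uniform on [n]∖[n/2] = {n/2+1, …, n}, with X, J, L mutually independent. Then E_{(x,j,l)←(X,J,L)} h(M(x; x[1,j]), M(x; x[1,l]))² ≤ 8 κ c. -/
open Finset

/-- Hellinger distance between two distributions on a finite set. -/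
noncomputable def hell {S : Type*} [Fintype S] (p q : S → ℝ) : ℝ :=
  Real.sqrt ((1/2) * ∑ s, (Real.sqrt (p s) - Real.sqrt (q s))^2)

/-- ℓ1-distance between two distributions on a finite set. -/
noncomputable def l1 {S : Type*} [Fintype S] (p q : S → ℝ) : ℝ :=
  ∑ s, |p s - q s|

/-- Shannon entropy (base 2) of a distribution on a finite set. -/
noncomputable def ent {S : Type*} [Fintype S] (p : S → ℝ) : ℝ :=
  -∑ s, p s * Real.logb 2 (p s)

/-- Conditional Shannon mutual information `I(A:B|C)` of a joint distribution on
`A × B × C`, via `I(A:B|C) = H(A,C) + H(B,C) - H(A,B,C) - H(C)`. -/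
noncomputable def condMI {A B C : Type*} [Fintype A] [Fintype B] [Fintype C]
    (p : A × B × C → ℝ) : ℝ :=
  ent (fun ac : A × C => ∑ b, p (ac.1, b, ac.2))
    + ent (fun bc : B × C => ∑ a, p (a, bc.1, bc.2))
    - ent p
    - ent (fun c : C => ∑ a, ∑ b, p (a, b, c))

/-- The prefix `x[1,k]` (1-based index `k = k₀+1` for `k₀ : Fin n`), padded with `false`. -/
def prefLe {n : ℕ} (x : Fin n → Bool) (k : Fin n) : Fin n → Bool :=
  fun i => if i ≤ k then x i else false

/-- The strict prefix `x[1,k−1]`, padded with `false`. -/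
def prefLt {n : ℕ} (x : Fin n → Bool) (k : Fin n) : Fin n → Bool :=
  fun i => if i < k then x i else false

/-- The string `x` with its `k`-th bit flipped. -/
def flipAt {n : ℕ} (x : Fin n → Bool) (k : Fin n) : Fin n → Bool :=
  Function.update x k (!(x k))


section Helpers

private lemma hell_nonneg' {S : Type*} [Fintype S] (p q : S → ℝ) : 0 ≤ hell p q :=
  Real.sqrt_nonneg _

private lemma hell_comm' {S : Type*} [Fintype S] (p q : S → ℝ) : hell p q = hell q p := by
  unfold hell
  congr 1
  refine congrArg _ (Finset.sum_congr rfl fun s _ => ?_)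
  ring

private lemma sqrt_sum_sq_add_le' {S : Type*} [Fintype S] (u v : S → ℝ) :
    Real.sqrt (∑ s, (u s + v s)^2) ≤ Real.sqrt (∑ s, u s ^ 2) + Real.sqrt (∑ s, v s ^ 2) := by
  have cs := Real.sum_mul_le_sqrt_mul_sqrt Finset.univ u v
  set X := Real.sqrt (∑ s, u s ^ 2) with hXdef
  set Y := Real.sqrt (∑ s, v s ^ 2) with hYdef
  have hX : X ^ 2 = ∑ s, u s ^ 2 := Real.sq_sqrt (by positivity)
  have hY : Y ^ 2 = ∑ s, v s ^ 2 := Real.sq_sqrt (by positivity)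
  have hXn : 0 ≤ X := Real.sqrt_nonneg _
  have hYn : 0 ≤ Y := Real.sqrt_nonneg _
  have expand : ∑ s, (u s + v s)^2
      = (∑ s, u s ^ 2) + 2 * (∑ s, u s * v s) + (∑ s, v s ^ 2) := by
    simp_rw [add_sq]
    rw [Finset.sum_add_distrib, Finset.sum_add_distrib, Finset.mul_sum]
    simp [mul_assoc]
  have h1 : ∑ s, (u s + v s)^2 ≤ (X + Y)^2 := by nlinarith [cs]
  calc Real.sqrt (∑ s, (u s + v s)^2) ≤ Real.sqrt ((X + Y)^2) := Real.sqrt_le_sqrt h1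
    _ = X + Y := Real.sqrt_sq (by positivity)

private lemma hell_triangle' {S : Type*} [Fintype S] (p q r : S → ℝ) :
    hell p r ≤ hell p q + hell q r := by
  have h2 : ∀ a b : S → ℝ, hell a b
      = Real.sqrt (1/2) * Real.sqrt (∑ s, (Real.sqrt (a s) - Real.sqrt (b s))^2) := by
    intro a b
    rw [hell, Real.sqrt_mul (by norm_num)]
  rw [h2, h2, h2, ← mul_add]
  refine mul_le_mul_of_nonneg_left ?_ (Real.sqrt_nonneg _)
  have := sqrt_sum_sq_add_le' (fun s => Real.sqrt (p s) - Real.sqrt (q s))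
    (fun s => Real.sqrt (q s) - Real.sqrt (r s))
  simpa [sub_add_sub_cancel] using this

private lemma kl_pt' {p q : ℝ} (hp : 0 ≤ p) (hq : 0 ≤ q) (h0 : q = 0 → p = 0) :
    2*p - 2*Real.sqrt (p*q) ≤ p * (Real.log p - Real.log q) := by
  rcases hp.eq_or_lt with h | h
  · simp [← h]
  · have hq' : 0 < q := by
      rcases hq.eq_or_lt with h' | h'
      · exact absurd (h0 h'.symm) (by linarith)
      · exact h'
    have hpos : 0 < Real.sqrt (q/p) := Real.sqrt_pos.2 (by positivity)
    have hlog := Real.log_le_sub_one_of_pos hpos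
    rw [Real.log_sqrt (by positivity), Real.log_div (by positivity) (by positivity)] at hlog
    have hs : p * Real.sqrt (q/p) = Real.sqrt (p*q) := by
      rw [Real.sqrt_div hq'.le, Real.sqrt_mul hp]
      calc p * (Real.sqrt q / Real.sqrt p) = (p / Real.sqrt p) * Real.sqrt q := by ring
        _ = Real.sqrt p * Real.sqrt q := by rw [Real.div_sqrt]
    have hmul := mul_le_mul_of_nonneg_left hlog h.le
    nlinarith [hmul, hs]

private lemma sum_hell_le' {S : Type*} [Fintype S] (p q : S → ℝ)
    (hp : ∀ s, 0 ≤ p s) (hq : ∀ s, 0 ≤ q s)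
    (hps : ∑ s, p s = 1) (hqs : ∑ s, q s = 1)
    (h0 : ∀ s, q s = 0 → p s = 0) :
    2 * hell p q ^ 2 ≤ ∑ s, p s * (Real.log (p s) - Real.log (q s)) := by
  have hsq : hell p q ^ 2 = (1/2) * ∑ s, (Real.sqrt (p s) - Real.sqrt (q s))^2 :=
    Real.sq_sqrt (by positivity)
  have e1 : ∑ s, (Real.sqrt (p s) - Real.sqrt (q s))^2
      = ∑ s, (p s + q s - 2 * Real.sqrt (p s * q s)) := by
    refine Finset.sum_congr rfl fun s _ => ?_
    rw [sub_sq, Real.sq_sqrt (hp s), Real.sq_sqrt (hq s), Real.sqrt_mul (hp s)]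
    ring
  have e2 : ∑ s, (p s + q s - 2 * Real.sqrt (p s * q s))
      = ∑ s, (2 * p s - 2 * Real.sqrt (p s * q s)) := by
    rw [Finset.sum_sub_distrib, Finset.sum_add_distrib, hps, hqs, Finset.sum_sub_distrib,
      ← Finset.mul_sum, ← Finset.mul_sum, hps]
    ring
  have e3 : ∑ s, (2 * p s - 2 * Real.sqrt (p s * q s))
      ≤ ∑ s, p s * (Real.log (p s) - Real.log (q s)) :=
    Finset.sum_le_sum fun s _ => kl_pt' (hp s) (hq s) (h0 s)
  calc 2 * hell p q ^ 2 = ∑ s, (p s + q s - 2 * Real.sqrt (p s * q s)) := by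
        rw [hsq, ← e1]; ring
    _ ≤ _ := by rw [e2]; exact e3

private lemma condMI_eq' {n : ℕ} (hpos : 0 < n) {T : Type*} [Fintype T]
    (Mc : (Fin n → Bool) → Fin n → T → ℝ)
    (hnn : ∀ x k m, 0 ≤ Mc x k m)
    (hsum : ∀ x k, ∑ m, Mc x k m = 1) :
    condMI (fun q : Fin n × T × (Fin n → Bool) =>
        (1 / 2 ^ n) * (1 / (n : ℝ)) * Mc q.2.2 q.1 q.2.1)
    = ((1/2^n) * (1/(n:ℝ)) / Real.log 2) *
        ∑ x : Fin n → Bool, ∑ k, ∑ m, Mc x k m *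
          (Real.log (Mc x k m) - Real.log ((1/(n:ℝ)) * ∑ k', Mc x k' m)) := by
  have hn : (0:ℝ) < (n:ℝ) := by exact_mod_cast hpos
  obtain ⟨a, ha, hap⟩ : ∃ a : ℝ, (1 / 2 ^ n) * (1 / (n : ℝ)) = a ∧ 0 < a :=
    ⟨_, rfl, by positivity⟩
  rw [ha]
  have esum : ∀ (x : Fin n → Bool) (k : Fin n), ∑ m : T, a * Mc x k m = a := by
    intro x k; rw [← Finset.mul_sum, hsum, mul_one]
  simp only [condMI, ent]
  have T1 : ∑ p : Fin n × (Fin n → Bool),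
        (∑ m : T, a * Mc p.2 p.1 m) * Real.logb 2 (∑ m : T, a * Mc p.2 p.1 m)
      = ∑ x : Fin n → Bool, ∑ k : Fin n, ∑ m : T, a * Mc x k m * Real.logb 2 a := by
    rw [Fintype.sum_prod_type, Finset.sum_comm]
    refine Finset.sum_congr rfl fun x _ => Finset.sum_congr rfl fun k _ => ?_
    rw [esum, ← Finset.sum_mul, esum]
  have T2 : ∑ p : T × (Fin n → Bool),
        (∑ k : Fin n, a * Mc p.2 k p.1) * Real.logb 2 (∑ k : Fin n, a * Mc p.2 k p.1)
      = ∑ x : Fin n → Bool, ∑ k : Fin n, ∑ m : T,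
          a * Mc x k m * Real.logb 2 (a * ∑ k' : Fin n, Mc x k' m) := by
    rw [Fintype.sum_prod_type, Finset.sum_comm]
    refine Finset.sum_congr rfl fun x _ => ?_
    rw [Finset.sum_comm]
    refine Finset.sum_congr rfl fun m _ => ?_
    conv_lhs => rw [← Finset.mul_sum]
    conv_rhs => rw [← Finset.sum_mul, ← Finset.mul_sum]
  have T3 : ∑ p : Fin n × T × (Fin n → Bool),
        a * Mc p.2.2 p.1 p.2.1 * Real.logb 2 (a * Mc p.2.2 p.1 p.2.1)
      = ∑ x : Fin n → Bool, ∑ k : Fin n, ∑ m : T,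
          a * Mc x k m * Real.logb 2 (a * Mc x k m) := by
    rw [Fintype.sum_prod_type]
    simp_rw [Fintype.sum_prod_type]
    trans (∑ k : Fin n, ∑ x : Fin n → Bool, ∑ m : T,
        a * Mc x k m * Real.logb 2 (a * Mc x k m))
    · exact Finset.sum_congr rfl fun k _ => Finset.sum_comm
    · exact Finset.sum_comm
  have e3 : ∀ x : Fin n → Bool,
      ∑ k : Fin n, ∑ m : T, a * Mc x k m * Real.logb 2 ((n:ℝ) * a)
        = ((n:ℝ) * a) * Real.logb 2 ((n:ℝ) * a) := by
    intro x
    simp_rw [← Finset.sum_mul, esum]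
    rw [Finset.sum_const, Finset.card_univ, Fintype.card_fin, nsmul_eq_mul]
  have e2 : ∀ x : Fin n → Bool, ∑ k : Fin n, ∑ m : T, a * Mc x k m = (n:ℝ) * a := by
    intro x
    simp_rw [esum]
    rw [Finset.sum_const, Finset.card_univ, Fintype.card_fin, nsmul_eq_mul]
  have T4 : ∑ x : Fin n → Bool,
        (∑ k : Fin n, ∑ m : T, a * Mc x k m) *
          Real.logb 2 (∑ k : Fin n, ∑ m : T, a * Mc x k m)
      = ∑ x : Fin n → Bool, ∑ k : Fin n, ∑ m : T,
          a * Mc x k m * Real.logb 2 ((n:ℝ) * a) := by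
    refine Finset.sum_congr rfl fun x _ => ?_
    rw [e2, e3]
  rw [T1, T2, T3, T4]
  calc
    -(∑ x : Fin n → Bool, ∑ k : Fin n, ∑ m : T, a * Mc x k m * Real.logb 2 a) +
        -(∑ x : Fin n → Bool, ∑ k : Fin n, ∑ m : T,
            a * Mc x k m * Real.logb 2 (a * ∑ k' : Fin n, Mc x k' m)) -
        -(∑ x : Fin n → Bool, ∑ k : Fin n, ∑ m : T,
            a * Mc x k m * Real.logb 2 (a * Mc x k m)) -
        -(∑ x : Fin n → Bool, ∑ k : Fin n, ∑ m : T,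
            a * Mc x k m * Real.logb 2 ((n:ℝ) * a))
      = ∑ x : Fin n → Bool, ∑ k : Fin n, ∑ m : T,
          (a * Mc x k m * Real.logb 2 (a * Mc x k m)
            + a * Mc x k m * Real.logb 2 ((n:ℝ) * a)
            - a * Mc x k m * Real.logb 2 a
            - a * Mc x k m * Real.logb 2 (a * ∑ k' : Fin n, Mc x k' m)) := by
        simp_rw [Finset.sum_sub_distrib, Finset.sum_add_distrib]
        ring
    _ = ∑ x : Fin n → Bool, ∑ k : Fin n, ∑ m : T,
          (a / Real.log 2) * (Mc x k m *
            (Real.log (Mc x k m) - Real.log ((1/(n:ℝ)) * ∑ k' : Fin n, Mc x k' m))) := by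
        refine Finset.sum_congr rfl fun x _ => Finset.sum_congr rfl fun k _ =>
          Finset.sum_congr rfl fun m _ => ?_
        rcases (hnn x k m).eq_or_lt with hf | hf
        · simp [← hf]
        · have hG : 0 < ∑ k' : Fin n, Mc x k' m :=
            lt_of_lt_of_le hf (Finset.single_le_sum (fun k' _ => hnn x k' m) (Finset.mem_univ k))
          simp only [Real.logb]
          rw [Real.log_mul hap.ne' hf.ne', Real.log_mul hn.ne' hap.ne',
            Real.log_mul hap.ne' hG.ne', Real.log_mul (by positivity : (1/(n:ℝ)) ≠ 0) hG.ne',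
            Real.log_div one_ne_zero hn.ne', Real.log_one]
          field_simp
          ring
    _ = (a / Real.log 2) * ∑ x : Fin n → Bool, ∑ k : Fin n, ∑ m : T, Mc x k m *
          (Real.log (Mc x k m) - Real.log ((1/(n:ℝ)) * ∑ k' : Fin n, Mc x k' m)) := by
        simp_rw [Finset.mul_sum]

end Helpers

/-- Lemma `thm-pairs`: with `X` uniform on `{0,1}^n`, `K` uniform on `[n]`
independent of `X`, and `M⁰` having conditional law `Mc x k` given `(X,K) = (x,k)`,
set `c = I(K : M⁰ | X)`.  For `J` uniform on `[n/2]` and `L` uniform on `[n]∖[n/2]`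
(here `j, l : Fin n` are 0-based, i.e. `(j:ℕ) < n/2` and `n/2 ≤ (l:ℕ)`),
`E_{(x,j,l)} h(M(x; x[1,j]), M(x; x[1,l]))² ≤ 8κc` with `κ = (ln 2)/2`. -/
theorem index_change_perturbation
    {n : ℕ} (hn : Even n) (hpos : 0 < n) {T : Type*} [Fintype T]
    (Mc : (Fin n → Bool) → Fin n → T → ℝ)
    (hnn : ∀ x k m, 0 ≤ Mc x k m)
    (hsum : ∀ x k, ∑ m, Mc x k m = 1) :
    (1 / 2 ^ n) * (2 / (n : ℝ)) ^ 2 *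
        ∑ x : Fin n → Bool,
          ∑ j ∈ Finset.univ.filter (fun j : Fin n => (j : ℕ) < n / 2),
            ∑ l ∈ Finset.univ.filter (fun l : Fin n => n / 2 ≤ (l : ℕ)),
              hell (Mc x j) (Mc x l) ^ 2
      ≤ 8 * (Real.log 2 / 2) *
          condMI (fun q : Fin n × T × (Fin n → Bool) =>
            (1 / 2 ^ n) * (1 / (n : ℝ)) * Mc q.2.2 q.1 q.2.1) := by
  classical
  have hn' : (0:ℝ) < (n:ℝ) := by exact_mod_cast hpos
  have hlog2 : (0:ℝ) < Real.log 2 := Real.log_pos (by norm_num)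
  obtain ⟨t, ht⟩ := hn
  -- the averaged distribution
  have hgnn : ∀ (x : Fin n → Bool) (m : T), 0 ≤ (1/(n:ℝ)) * ∑ k' : Fin n, Mc x k' m := by
    intro x m
    have : 0 ≤ ∑ k' : Fin n, Mc x k' m := Finset.sum_nonneg fun k' _ => hnn x k' m
    positivity
  have hgsum : ∀ x : Fin n → Bool, ∑ m : T, (1/(n:ℝ)) * ∑ k' : Fin n, Mc x k' m = 1 := by
    intro x
    rw [← Finset.mul_sum, Finset.sum_comm]
    simp_rw [hsum]
    rw [Finset.sum_const, Finset.card_univ, Fintype.card_fin, nsmul_eq_mul, mul_one]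
    field_simp
  have hg0 : ∀ (x : Fin n → Bool) (m : T) (k : Fin n),
      (1/(n:ℝ)) * ∑ k' : Fin n, Mc x k' m = 0 → Mc x k m = 0 := by
    intro x m k h
    have hG : ∑ k' : Fin n, Mc x k' m = 0 := by
      rcases mul_eq_zero.1 h with h' | h'
      · exact absurd h' (by positivity)
      · exact h'
    exact (Finset.sum_eq_zero_iff_of_nonneg (fun k' _ => hnn x k' m)).1 hG k (Finset.mem_univ k)
  -- D bound
  have hDk : ∀ (x : Fin n → Bool) (k : Fin n),
      hell (Mc x k) (fun m => (1/(n:ℝ)) * ∑ k' : Fin n, Mc x k' m) ^ 2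
        ≤ ∑ m : T, Mc x k m *
            (Real.log (Mc x k m) - Real.log ((1/(n:ℝ)) * ∑ k' : Fin n, Mc x k' m)) := by
    intro x k
    have h := sum_hell_le' (Mc x k) (fun m => (1/(n:ℝ)) * ∑ k' : Fin n, Mc x k' m)
      (hnn x k) (fun m => hgnn x m) (hsum x k) (hgsum x) (fun m hm => hg0 x m k hm)
    nlinarith [sq_nonneg (hell (Mc x k) (fun m => (1/(n:ℝ)) * ∑ k' : Fin n, Mc x k' m))]
  -- triangle bound
  have tri : ∀ (x : Fin n → Bool) (j l : Fin n),
      hell (Mc x j) (Mc x l) ^ 2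
        ≤ 2 * hell (Mc x j) (fun m => (1/(n:ℝ)) * ∑ k' : Fin n, Mc x k' m) ^ 2
          + 2 * hell (Mc x l) (fun m => (1/(n:ℝ)) * ∑ k' : Fin n, Mc x k' m) ^ 2 := by
    intro x j l
    have htr := hell_triangle' (Mc x j) (fun m => (1/(n:ℝ)) * ∑ k' : Fin n, Mc x k' m) (Mc x l)
    have hc : hell (fun m => (1/(n:ℝ)) * ∑ k' : Fin n, Mc x k' m) (Mc x l)
        = hell (Mc x l) (fun m => (1/(n:ℝ)) * ∑ k' : Fin n, Mc x k' m) := hell_comm' _ _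
    rw [hc] at htr
    have hsq : hell (Mc x j) (Mc x l) ^ 2
        ≤ ((hell (Mc x j) fun m => (1/(n:ℝ)) * ∑ k' : Fin n, Mc x k' m)
            + hell (Mc x l) fun m => (1/(n:ℝ)) * ∑ k' : Fin n, Mc x k' m) ^ 2 :=
      pow_le_pow_left₀ (hell_nonneg' _ _) htr 2
    nlinarith [hsq, sq_nonneg ((hell (Mc x j) fun m => (1/(n:ℝ)) * ∑ k' : Fin n, Mc x k' m)
      - hell (Mc x l) fun m => (1/(n:ℝ)) * ∑ k' : Fin n, Mc x k' m)]
  -- cardinalities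
  have hhalf : n/2 < n := Nat.div_lt_self hpos one_lt_two
  have cardA : (Finset.univ.filter (fun j : Fin n => (j:ℕ) < n / 2)).card = n/2 := by
    have e : (Finset.univ.filter (fun j : Fin n => (j:ℕ) < n / 2))
        = Finset.Iio (⟨n/2, hhalf⟩ : Fin n) := by
      ext j
      simp [Fin.lt_def]
    rw [e, Fin.card_Iio]
  have hBeq : (Finset.univ.filter (fun l : Fin n => n / 2 ≤ (l:ℕ)))
      = Finset.univ.filter (fun l : Fin n => ¬ ((l:ℕ) < n / 2)) := by
    apply Finset.filter_congr
    intro l _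
    simp [not_lt]
  have cardB : (Finset.univ.filter (fun l : Fin n => n / 2 ≤ (l:ℕ))).card = n - n/2 := by
    rw [hBeq, Finset.filter_not, Finset.card_sdiff_of_subset (Finset.filter_subset _ _),
      Finset.card_univ, Fintype.card_fin, cardA]
  have hcast : ((n - n/2 : ℕ) : ℝ) = ((n/2 : ℕ) : ℝ) := by
    congr 1
    omega
  have h2half : ((n/2 : ℕ) : ℝ) * 2 = (n : ℝ) := by
    have e : n/2 = t := by omega
    rw [e, ht]
    push_cast
    ring
  -- per-x bound
  have perx : ∀ x : Fin n → Bool,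
      ∑ j ∈ Finset.univ.filter (fun j : Fin n => (j : ℕ) < n / 2),
        ∑ l ∈ Finset.univ.filter (fun l : Fin n => n / 2 ≤ (l : ℕ)),
          hell (Mc x j) (Mc x l) ^ 2
      ≤ (n:ℝ) * ∑ k : Fin n,
          hell (Mc x k) (fun m => (1/(n:ℝ)) * ∑ k' : Fin n, Mc x k' m) ^ 2 := by
    intro x
    set A := Finset.univ.filter (fun j : Fin n => (j : ℕ) < n / 2) with hA
    set B := Finset.univ.filter (fun l : Fin n => n / 2 ≤ (l : ℕ)) with hB
    set H : Fin n → ℝ :=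
      fun k => hell (Mc x k) (fun m => (1/(n:ℝ)) * ∑ k' : Fin n, Mc x k' m) ^ 2 with hH
    have step1 : ∑ j ∈ A, ∑ l ∈ B, hell (Mc x j) (Mc x l) ^ 2
        ≤ ∑ j ∈ A, ∑ l ∈ B, (2 * H j + 2 * H l) :=
      Finset.sum_le_sum fun j _ => Finset.sum_le_sum fun l _ => tri x j l
    have step2 : ∑ j ∈ A, ∑ l ∈ B, (2 * H j + 2 * H l)
        = (B.card : ℝ) * (2 * ∑ j ∈ A, H j) + (A.card : ℝ) * (2 * ∑ l ∈ B, H l) := by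
      simp_rw [Finset.sum_add_distrib, Finset.sum_const, nsmul_eq_mul]
      simp_rw [← Finset.mul_sum]
    have step3 : (B.card : ℝ) * (2 * ∑ j ∈ A, H j) + (A.card : ℝ) * (2 * ∑ l ∈ B, H l)
        = (n:ℝ) * (∑ j ∈ A, H j + ∑ l ∈ B, H l) := by
      rw [cardA, cardB, hcast, ← h2half]
      ring
    have step4 : ∑ j ∈ A, H j + ∑ l ∈ B, H l = ∑ k : Fin n, H k := by
      rw [hA, hBeq]
      exact Finset.sum_filter_add_sum_filter_not _ _ _
    calc ∑ j ∈ A, ∑ l ∈ B, hell (Mc x j) (Mc x l) ^ 2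
        ≤ ∑ j ∈ A, ∑ l ∈ B, (2 * H j + 2 * H l) := step1
      _ = (B.card : ℝ) * (2 * ∑ j ∈ A, H j) + (A.card : ℝ) * (2 * ∑ l ∈ B, H l) := step2
      _ = (n:ℝ) * (∑ j ∈ A, H j + ∑ l ∈ B, H l) := step3
      _ = (n:ℝ) * ∑ k : Fin n, H k := by rw [step4]
  -- final assembly
  rw [condMI_eq' hpos Mc hnn hsum]
  have key1 : ∀ W : ℝ, (1 / 2 ^ n : ℝ) * (2 / (n:ℝ))^2 * ((n:ℝ) * W)
      = 4 * ((1/2^n) * (1/(n:ℝ))) * W := by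
    intro W
    field_simp
    ring
  have key2 : ∀ W : ℝ, 8 * (Real.log 2 / 2) * ((1/2^n) * (1/(n:ℝ)) / Real.log 2 * W)
      = 4 * ((1/2^n) * (1/(n:ℝ))) * W := by
    intro W
    field_simp
    ring
  calc (1 / 2 ^ n : ℝ) * (2 / (n : ℝ)) ^ 2 *
        ∑ x : Fin n → Bool,
          ∑ j ∈ Finset.univ.filter (fun j : Fin n => (j : ℕ) < n / 2),
            ∑ l ∈ Finset.univ.filter (fun l : Fin n => n / 2 ≤ (l : ℕ)),
              hell (Mc x j) (Mc x l) ^ 2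
      ≤ (1 / 2 ^ n : ℝ) * (2 / (n : ℝ)) ^ 2 *
          ∑ x : Fin n → Bool, ((n:ℝ) * ∑ k : Fin n,
            hell (Mc x k) (fun m => (1/(n:ℝ)) * ∑ k' : Fin n, Mc x k' m) ^ 2) := by
        refine mul_le_mul_of_nonneg_left (Finset.sum_le_sum fun x _ => perx x) (by positivity)
    _ = 4 * ((1/2^n) * (1/(n:ℝ))) * ∑ x : Fin n → Bool, ∑ k : Fin n,
            hell (Mc x k) (fun m => (1/(n:ℝ)) * ∑ k' : Fin n, Mc x k' m) ^ 2 := by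
        rw [← Finset.mul_sum]
        exact key1 _
    _ ≤ 4 * ((1/2^n) * (1/(n:ℝ))) * ∑ x : Fin n → Bool, ∑ k : Fin n, ∑ m : T,
            Mc x k m * (Real.log (Mc x k m) - Real.log ((1/(n:ℝ)) * ∑ k' : Fin n, Mc x k' m)) := by
        refine mul_le_mul_of_nonneg_left
          (Finset.sum_le_sum fun x _ => Finset.sum_le_sum fun k _ => hDk x k) (by positivity)
    _ = 8 * (Real.log 2 / 2) * ((1/2^n) * (1/(n:ℝ)) / Real.log 2 *
          ∑ x : Fin n → Bool, ∑ k : Fin n, ∑ m : T,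
            Mc x k m * (Real.log (Mc x k m) - Real.log ((1/(n:ℝ)) * ∑ k' : Fin n, Mc x k' m))) := by
        rw [key2]
end

section
/- Let (X, K, M) be jointly distributed random variables taking values in finite sets. For (x,k) in the support of (X,K), let M|x,k denote the conditional distribution of M given (X,K) = (x,k), and let M|x denote the conditional distribution of M given X = x. Then E_{(x,k)←(X,K)} h(M|x,k , M|x)² ≤ κ · I(K : M | X). -/
open Finset

lemma key_pt (P Q : ℝ) (hP : 0 ≤ P) (hQ : 0 ≤ Q) (hPQ : 0 < P → 0 < Q) :
    P + (P/2) * (Real.log Q - Real.log P) ≤ Real.sqrt P * Real.sqrt Q := by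
  rcases eq_or_lt_of_le hP with h0 | hPpos
  · simp [← h0]
  · have hQpos := hPQ hPpos
    have hsP : (0:ℝ) < Real.sqrt P := Real.sqrt_pos.2 hPpos
    have hr : 0 < Real.sqrt Q / Real.sqrt P := by positivity
    have hlog : Real.log (Real.sqrt Q / Real.sqrt P) ≤ Real.sqrt Q / Real.sqrt P - 1 :=
      Real.log_le_sub_one_of_pos hr
    have hlq : Real.log (Real.sqrt Q) = Real.log Q / 2 := Real.log_sqrt hQ
    have hlp : Real.log (Real.sqrt P) = Real.log P / 2 := Real.log_sqrt hP
    rw [Real.log_div (by positivity) (by positivity), hlq, hlp] at hlog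
    have hPsq : Real.sqrt P * Real.sqrt P = P := Real.mul_self_sqrt hP
    have h2 := mul_le_mul_of_nonneg_left hlog hP
    have hid : P * (Real.sqrt Q / Real.sqrt P) = Real.sqrt P * Real.sqrt Q := by
      field_simp; linear_combination (-1:ℝ) * hPsq
    nlinarith [h2, hid]

lemma block_aux {M : Type*} [Fintype M] (a t : M → ℝ) (s u : ℝ)
    (ha : ∀ m, 0 ≤ a m) (hat : ∀ m, a m ≤ t m)
    (hs : ∑ m, a m = s) (hu : ∑ m, t m = u)
    (hspos : 0 < s) (hupos : 0 < u) :
    s * ((1/2) * ∑ m, (Real.sqrt (a m / s) - Real.sqrt (t m / u))^2)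
      ≤ (1/2) * ∑ m, a m * (Real.log (a m) + Real.log u - Real.log s - Real.log (t m)) := by
  have expand : s * ((1/2) * ∑ m, (Real.sqrt (a m / s) - Real.sqrt (t m / u))^2)
      = ∑ m, s/2 * (Real.sqrt (a m / s) - Real.sqrt (t m / u))^2 := by
    rw [Finset.mul_sum, Finset.mul_sum]
    exact Finset.sum_congr rfl fun m _ => by ring
  rw [expand]
  have hpt : ∀ m ∈ Finset.univ, s/2 * (Real.sqrt (a m / s) - Real.sqrt (t m / u))^2
      ≤ 1/2 * (a m * (Real.log (a m) + Real.log u - Real.log s - Real.log (t m)))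
        + (s * t m / (2*u) - a m / 2) := by
    intro m _
    have htnn : 0 ≤ t m := (ha m).trans (hat m)
    have hQ2 : Real.sqrt (t m / u) ^ 2 = t m / u := Real.sq_sqrt (by positivity)
    rcases eq_or_lt_of_le (ha m) with h0a | hapos
    · rw [← h0a]
      have e : s/2 * (Real.sqrt (0/s) - Real.sqrt (t m / u))^2 = s * t m / (2*u) := by
        rw [zero_div, Real.sqrt_zero, zero_sub, neg_sq, hQ2]; ring
      rw [e]
      simp
    · have htm : 0 < t m := lt_of_lt_of_le hapos (hat m)
      have hP2 : Real.sqrt (a m / s) ^ 2 = a m / s := Real.sq_sqrt (by positivity)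
      have hk := key_pt (a m / s) (t m / u) (by positivity) (by positivity)
        (fun _ => by positivity)
      have hk' : a m + (a m / 2) * ((Real.log (t m) - Real.log u)
            - (Real.log (a m) - Real.log s))
          ≤ s * (Real.sqrt (a m / s) * Real.sqrt (t m / u)) := by
        have h2 := mul_le_mul_of_nonneg_left hk hspos.le
        rw [Real.log_div htm.ne' hupos.ne', Real.log_div hapos.ne' hspos.ne'] at h2
        have e : a m + (a m / 2) * ((Real.log (t m) - Real.log u)
              - (Real.log (a m) - Real.log s))
            = s * (a m / s + a m / s / 2 * ((Real.log (t m) - Real.log u)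
              - (Real.log (a m) - Real.log s))) := by
          field_simp
          all_goals ring
        rw [e]; exact h2
      have ex : s/2 * Real.sqrt (a m / s) ^ 2 = a m / 2 := by
        rw [hP2]; field_simp
      have ey : s/2 * Real.sqrt (t m / u) ^ 2 = s * t m / (2*u) := by
        rw [hQ2]; ring
      nlinarith [hk', ex, ey]
  calc ∑ m, s/2 * (Real.sqrt (a m / s) - Real.sqrt (t m / u))^2
      ≤ ∑ m, (1/2 * (a m * (Real.log (a m) + Real.log u - Real.log s - Real.log (t m)))
        + (s * t m / (2*u) - a m / 2)) := Finset.sum_le_sum hpt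
    _ = (1/2) * ∑ m, a m * (Real.log (a m) + Real.log u - Real.log s - Real.log (t m)) := by
        rw [Finset.sum_add_distrib, Finset.sum_sub_distrib, ← Finset.mul_sum]
        have h1 : ∑ m, s * t m / (2*u) = s / 2 := by
          have e : ∑ m, s * t m / (2*u) = (s/(2*u)) * ∑ m, t m := by
            rw [Finset.mul_sum]
            exact Finset.sum_congr rfl fun m _ => by ring
          rw [e, hu]
          field_simp
        have h2 : ∑ m, a m / 2 = s / 2 := by rw [← Finset.sum_div, hs]
        rw [h1, h2]
        ring

lemma per_block {M : Type*} [Fintype M] (a t : M → ℝ) (u : ℝ)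
    (ha : ∀ m, 0 ≤ a m) (hat : ∀ m, a m ≤ t m) (hu : ∑ m, t m = u) :
    (∑ m', a m') * hell (fun m => a m / ∑ m', a m') (fun m => t m / u) ^ 2
      ≤ (1/2) * ∑ m, a m * (Real.log (a m) + Real.log u
          - Real.log (∑ m', a m') - Real.log (t m)) := by
  have hs0 : 0 ≤ ∑ m', a m' := Finset.sum_nonneg fun m _ => ha m
  rcases eq_or_lt_of_le hs0 with h0 | hspos
  · rw [← h0, zero_mul]
    have hz : ∀ m ∈ Finset.univ, a m = 0 :=
      (Finset.sum_eq_zero_iff_of_nonneg (fun m _ => ha m)).1 h0.symm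
    rw [Finset.sum_eq_zero (fun m hm => by rw [hz m hm, zero_mul])]
    simp
  · have hupos : 0 < u := by
      rw [← hu]
      exact lt_of_lt_of_le hspos (Finset.sum_le_sum fun m _ => hat m)
    have hh : hell (fun m => a m / ∑ m', a m') (fun m => t m / u) ^ 2
        = (1/2) * ∑ m, (Real.sqrt (a m / ∑ m', a m') - Real.sqrt (t m / u))^2 := by
      rw [hell, Real.sq_sqrt]
      positivity
    rw [hh]
    exact block_aux a t _ u ha hat rfl hu hspos hupos

lemma comb {α : Type*} [Fintype α] (f g h i : α → ℝ) :
    (∑ j, f j) + (∑ j, g j) - (∑ j, h j) - (∑ j, i j) = ∑ j, (f j + g j - h j - i j) := by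
  rw [← Finset.sum_add_distrib, ← Finset.sum_sub_distrib, ← Finset.sum_sub_distrib]

lemma condMI_eq {X K M : Type*} [Fintype X] [Fintype K] [Fintype M]
    (p : X × K × M → ℝ) :
    condMI (fun q : K × M × X => p (q.2.2, q.1, q.2.1))
      = ∑ x, ∑ k, ∑ m, (p (x,k,m) * Real.logb 2 (p (x,k,m))
          + p (x,k,m) * Real.logb 2 (∑ k', ∑ m', p (x,k',m'))
          - p (x,k,m) * Real.logb 2 (∑ m', p (x,k,m'))
          - p (x,k,m) * Real.logb 2 (∑ k', p (x,k',m))) := by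
  simp only [condMI, ent, Fintype.sum_prod_type]
  have e1 : ∑ k, ∑ x, (∑ m, p (x,k,m)) * Real.logb 2 (∑ m, p (x,k,m))
      = ∑ x, ∑ k, ∑ m, p (x,k,m) * Real.logb 2 (∑ m', p (x,k,m')) := by
    rw [Finset.sum_comm]
    exact Finset.sum_congr rfl fun x _ => Finset.sum_congr rfl fun k _ => by rw [Finset.sum_mul]
  have e2 : ∑ m, ∑ x, (∑ k, p (x,k,m)) * Real.logb 2 (∑ k, p (x,k,m))
      = ∑ x, ∑ k, ∑ m, p (x,k,m) * Real.logb 2 (∑ k', p (x,k',m)) := by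
    rw [Finset.sum_comm]
    refine Finset.sum_congr rfl fun x _ => ?_
    calc ∑ m, (∑ k, p (x,k,m)) * Real.logb 2 (∑ k, p (x,k,m))
        = ∑ m, ∑ k, p (x,k,m) * Real.logb 2 (∑ k', p (x,k',m)) :=
          Finset.sum_congr rfl fun m _ => by rw [Finset.sum_mul]
      _ = ∑ k, ∑ m, p (x,k,m) * Real.logb 2 (∑ k', p (x,k',m)) := Finset.sum_comm
  have e3 : ∑ k, ∑ m, ∑ x, p (x,k,m) * Real.logb 2 (p (x,k,m))
      = ∑ x, ∑ k, ∑ m, p (x,k,m) * Real.logb 2 (p (x,k,m)) := by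
    calc ∑ k, ∑ m, ∑ x, p (x,k,m) * Real.logb 2 (p (x,k,m))
        = ∑ k, ∑ x, ∑ m, p (x,k,m) * Real.logb 2 (p (x,k,m)) :=
          Finset.sum_congr rfl fun k _ => Finset.sum_comm
      _ = _ := Finset.sum_comm
  have e4 : ∑ x, (∑ k, ∑ m, p (x,k,m)) * Real.logb 2 (∑ k, ∑ m, p (x,k,m))
      = ∑ x, ∑ k, ∑ m, p (x,k,m) * Real.logb 2 (∑ k', ∑ m', p (x,k',m')) := by
    refine Finset.sum_congr rfl fun x _ => ?_
    calc (∑ k, ∑ m, p (x,k,m)) * Real.logb 2 (∑ k, ∑ m, p (x,k,m))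
        = ∑ k, (∑ m, p (x,k,m)) * Real.logb 2 (∑ k', ∑ m', p (x,k',m')) := by rw [Finset.sum_mul]
      _ = ∑ k, ∑ m, p (x,k,m) * Real.logb 2 (∑ k', ∑ m', p (x,k',m')) :=
          Finset.sum_congr rfl fun k _ => by rw [Finset.sum_mul]
  rw [e1, e2, e3, e4]
  simp only [← comb]
  ring

/-- conditional average encoding: for jointly distributed finite
random variables `(X,K,M)` with joint pmf `p`,
`E_{(x,k)←(X,K)} h(M|x,k , M|x)² ≤ κ · I(K:M|X)` with `κ = (ln 2)/2`. -/
theorem conditional_average_encoding {X K M : Type*} [Fintype X] [Fintype K] [Fintype M]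
    (p : X × K × M → ℝ) (hnn : ∀ q, 0 ≤ p q) (hsum : ∑ q, p q = 1) :
    ∑ x, ∑ k, (∑ m, p (x, k, m)) *
        hell (fun m => p (x, k, m) / ∑ m', p (x, k, m'))
             (fun m => (∑ k', p (x, k', m)) / ∑ k', ∑ m', p (x, k', m')) ^ 2
      ≤ (Real.log 2 / 2) * condMI (fun q : K × M × X => p (q.2.2, q.1, q.2.1)) := by
  have h2ne : Real.log 2 ≠ 0 := (Real.log_pos one_lt_two).ne'
  have hb : ∀ y : ℝ, Real.log 2 * Real.logb 2 y = Real.log y := by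
    intro y; rw [Real.logb]; field_simp
  have hfinal : (Real.log 2 / 2) * condMI (fun q : K × M × X => p (q.2.2, q.1, q.2.1))
      = ∑ x, ∑ k, (1/2) * ∑ m, p (x,k,m) * (Real.log (p (x,k,m))
          + Real.log (∑ k', ∑ m', p (x,k',m'))
          - Real.log (∑ m', p (x,k,m')) - Real.log (∑ k', p (x,k',m))) := by
    rw [condMI_eq, Finset.mul_sum]
    refine Finset.sum_congr rfl fun x _ => ?_
    rw [Finset.mul_sum]
    refine Finset.sum_congr rfl fun k _ => ?_
    rw [Finset.mul_sum, Finset.mul_sum]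
    refine Finset.sum_congr rfl fun m _ => ?_
    linear_combination (p (x,k,m)/2) * hb (p (x,k,m))
      + (p (x,k,m)/2) * hb (∑ k', ∑ m', p (x,k',m'))
      - (p (x,k,m)/2) * hb (∑ m', p (x,k,m'))
      - (p (x,k,m)/2) * hb (∑ k', p (x,k',m))
  rw [hfinal]
  refine Finset.sum_le_sum fun x _ => Finset.sum_le_sum fun k _ => ?_
  have hswap : ∑ m, (∑ k', p (x,k',m)) = ∑ k', ∑ m', p (x,k',m') := Finset.sum_comm
  exact per_block (fun m => p (x,k,m)) (fun m => ∑ k', p (x,k',m))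
    (∑ k', ∑ m', p (x,k',m')) (fun m => hnn _)
    (fun m => Finset.single_le_sum (f := fun k' => p (x,k',m)) (fun k' _ => hnn _) (Finset.mem_univ k))
    hswap
end

section
/- Let T be a finite set, 𝒳 and 𝒴 arbitrary sets, and for each (x,y) ∈ 𝒳 × 𝒴 let M(x,y) be a probability distribution on T such that M(x,y)(m) = α(m,x)·β(m,y) for all m ∈ T, for some nonnegative functions α on T × 𝒳 and β on T × 𝒴 (such a factorization holds for the message-transcript distribution of any two-party private-coin communication protocol). Then for all x, u ∈ 𝒳 and all y, v ∈ 𝒴, h(M(x,y), M(u,v)) = h(M(x,v), M(u,y)). -/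
open Finset

/-- Cut-and-Paste: if the transcript distributions
`M(x,y)(m) = α(m,x)·β(m,y)` factorize as in a two-party private-coin protocol,
then `h(M(x,y), M(u,v)) = h(M(x,v), M(u,y))`. -/
theorem cut_and_paste {T : Type*} [Fintype T] {𝒳 𝒴 : Type*}
    (α : T → 𝒳 → ℝ) (β : T → 𝒴 → ℝ)
    (hα : ∀ m x, 0 ≤ α m x) (hβ : ∀ m y, 0 ≤ β m y)
    (hsum : ∀ x y, ∑ m, α m x * β m y = 1)
    (x u : 𝒳) (y v : 𝒴) :
    hell (fun m => α m x * β m y) (fun m => α m u * β m v)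
      = hell (fun m => α m x * β m v) (fun m => α m u * β m y) := by
  have key : ∀ (a b : 𝒳) (c d : 𝒴) (m : T),
      (Real.sqrt (α m a * β m c) - Real.sqrt (α m b * β m d))^2
        = α m a * β m c + α m b * β m d
          - 2 * (Real.sqrt (α m a) * Real.sqrt (α m b) *
              (Real.sqrt (β m c) * Real.sqrt (β m d))) := by
    intro a b c d m
    rw [sub_sq, Real.sq_sqrt (mul_nonneg (hα m a) (hβ m c)),
      Real.sq_sqrt (mul_nonneg (hα m b) (hβ m d)),
      Real.sqrt_mul (hα m a), Real.sqrt_mul (hα m b)]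
    ring
  have sumkey : ∀ (a b : 𝒳) (c d : 𝒴),
      ∑ m, (Real.sqrt (α m a * β m c) - Real.sqrt (α m b * β m d))^2
        = 2 - 2 * ∑ m, Real.sqrt (α m a) * Real.sqrt (α m b) *
              (Real.sqrt (β m c) * Real.sqrt (β m d)) := by
    intro a b c d
    simp only [key]
    rw [Finset.sum_sub_distrib, Finset.sum_add_distrib, hsum, hsum,
      ← Finset.mul_sum]
    ring
  unfold hell
  rw [sumkey, sumkey]
  congr 4
  apply Finset.sum_congr rfl
  intro m _
  ring
end

section
/- Let (A, B) be jointly distributed random variables taking values in finite sets. For b in the support of B, let A|b denote the conditional distribution of A given B = b, and let A also denote the marginal distribution of A. Then E_{b←B} h(A|b, A)² ≤ κ · I(A : B). -/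
open Finset

/-- Shannon mutual information `I(A:B)` of a joint distribution on `A × B`. -/
noncomputable def mutInfo {A B : Type*} [Fintype A] [Fintype B] (p : A × B → ℝ) : ℝ :=
  ent (fun a => ∑ b, p (a, b)) + ent (fun b => ∑ a, p (a, b)) - ent p

private lemma pointwise_ineq (x y : ℝ) (hx : 0 ≤ x) (hy : 0 ≤ y) (h0 : y = 0 → x = 0) :
    (Real.sqrt x - Real.sqrt y)^2 + (x - y) ≤ x * Real.log (x / y) := by
  rcases eq_or_lt_of_le hx with h | hxpos
  · rw [← h]
    simp [Real.sq_sqrt hy]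
  · have hy' : 0 < y := by
      rcases eq_or_lt_of_le hy with h | h
      · exact absurd (h0 h.symm) (ne_of_gt hxpos)
      · exact h
    have hsx : 0 < Real.sqrt x := Real.sqrt_pos.mpr hxpos
    have hsy : 0 < Real.sqrt y := Real.sqrt_pos.mpr hy'
    have ht : Real.log (Real.sqrt y / Real.sqrt x) ≤ Real.sqrt y / Real.sqrt x - 1 :=
      Real.log_le_sub_one_of_pos (by positivity)
    have hlog : Real.log (x / y) = -2 * Real.log (Real.sqrt y / Real.sqrt x) := by
      rw [Real.log_div hsy.ne' hsx.ne', Real.log_sqrt hy, Real.log_sqrt hx,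
        Real.log_div hxpos.ne' hy'.ne']
      ring
    have hxs : Real.sqrt x ^ 2 = x := Real.sq_sqrt hx
    have hys : Real.sqrt y ^ 2 = y := Real.sq_sqrt hy
    rw [hlog]
    have hmul : x * (Real.sqrt y / Real.sqrt x) = Real.sqrt x * Real.sqrt y := by
      field_simp
      linear_combination (-1 : ℝ) * hxs
    have key : x * Real.log (Real.sqrt y / Real.sqrt x) ≤ Real.sqrt x * Real.sqrt y - x := by
      have := mul_le_mul_of_nonneg_left ht hx
      rw [mul_sub, hmul, mul_one] at this
      exact this
    nlinarith [key, hxs, hys]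

private lemma log2_mul_ent {T : Type*} [Fintype T] (f : T → ℝ) :
    Real.log 2 * ent f = -∑ t, f t * Real.log (f t) := by
  have hlog2 : Real.log 2 ≠ 0 := ne_of_gt (Real.log_pos one_lt_two)
  rw [ent, mul_neg, neg_inj, Finset.mul_sum]
  apply Finset.sum_congr rfl
  intro t _
  rw [Real.logb, div_eq_inv_mul]
  field_simp

private lemma hellsq_le_half_kl {S : Type*} [Fintype S] (p q : S → ℝ)
    (hp : ∀ s, 0 ≤ p s) (hq : ∀ s, 0 ≤ q s)
    (hsum : ∑ s, p s = ∑ s, q s) (hac : ∀ s, q s = 0 → p s = 0) :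
    hell p q ^ 2 ≤ (1/2) * ∑ s, p s * Real.log (p s / q s) := by
  have h1 : hell p q ^ 2 = (1/2) * ∑ s, (Real.sqrt (p s) - Real.sqrt (q s))^2 := by
    rw [hell, Real.sq_sqrt (by positivity)]
  rw [h1]
  have key : ∑ s, ((Real.sqrt (p s) - Real.sqrt (q s))^2 + (p s - q s))
      ≤ ∑ s, p s * Real.log (p s / q s) :=
    Finset.sum_le_sum fun s _ => pointwise_ineq _ _ (hp s) (hq s) (hac s)
  rw [Finset.sum_add_distrib, Finset.sum_sub_distrib, hsum, sub_self, add_zero] at key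
  linarith

/-- Average encoding theorem: for jointly distributed finite random
variables `(A,B)` with joint pmf `p`,
`E_{b←B} h(A|b, A)² ≤ κ · I(A:B)` with `κ = (ln 2)/2`. -/
theorem average_encoding {A B : Type*} [Fintype A] [Fintype B]
    (p : A × B → ℝ) (hnn : ∀ ab, 0 ≤ p ab) (hsum : ∑ ab, p ab = 1) :
    ∑ b, (∑ a, p (a, b)) *
        hell (fun a => p (a, b) / ∑ a', p (a', b)) (fun a => ∑ b', p (a, b')) ^ 2
      ≤ (Real.log 2 / 2) * mutInfo p := by
  classical
  set q : B → ℝ := fun b => ∑ a, p (a, b) with hqdef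
  set r : A → ℝ := fun a => ∑ b, p (a, b) with hrdef
  have hqnn : ∀ b, 0 ≤ q b := fun b => Finset.sum_nonneg fun a _ => hnn _
  have hrnn : ∀ a, 0 ≤ r a := fun a => Finset.sum_nonneg fun b _ => hnn _
  have hqsum : ∑ b, q b = 1 := by
    rw [← hsum, Fintype.sum_prod_type]
    exact Finset.sum_comm
  have hrsum : ∑ a, r a = 1 := by
    rw [← hsum, Fintype.sum_prod_type]
  have hple_q : ∀ a b, p (a, b) ≤ q b := fun a b =>
    Finset.single_le_sum (fun a' _ => hnn (a', b)) (Finset.mem_univ a)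
  have hple_r : ∀ a b, p (a, b) ≤ r a := fun a b =>
    Finset.single_le_sum (fun b' _ => hnn (a, b')) (Finset.mem_univ b)
  -- Step 1: bound by sum of KL-type terms
  have step1 : ∑ b, q b * hell (fun a => p (a, b) / q b) r ^ 2
      ≤ (1/2) * ∑ b, ∑ a, p (a, b) * Real.log (p (a, b) / (q b * r a)) := by
    rw [Finset.mul_sum]
    apply Finset.sum_le_sum
    intro b _
    rcases eq_or_lt_of_le (hqnn b) with hqb | hqb
    · have hzero : ∀ a, p (a, b) = 0 := by
        intro a
        have := hple_q a b
        have := hnn (a, b)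
        linarith [hqb]
      rw [← hqb, zero_mul]
      refine mul_nonneg (by norm_num) (Finset.sum_nonneg fun a _ => ?_)
      rw [hzero a, zero_mul]
    · have hkl := hellsq_le_half_kl (fun a => p (a, b) / q b) r
        (fun a => div_nonneg (hnn _) (hqnn b)) hrnn
        (by rw [← Finset.sum_div, div_self hqb.ne', hrsum])
        (by
          intro a hra
          have h1 : p (a, b) = 0 := le_antisymm (hra ▸ hple_r a b) (hnn _)
          simp [h1])
      have hmul := mul_le_mul_of_nonneg_left hkl (hqnn b)
      have hS : q b * ∑ a, (p (a, b) / q b) * Real.log ((p (a, b) / q b) / r a)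
          = ∑ a, p (a, b) * Real.log (p (a, b) / (q b * r a)) := by
        rw [Finset.mul_sum]
        refine Finset.sum_congr rfl fun a _ => ?_
        rw [div_div]
        field_simp
      calc q b * hell (fun a => p (a, b) / q b) r ^ 2
          ≤ q b * ((1/2) * ∑ a, (p (a, b) / q b) * Real.log ((p (a, b) / q b) / r a)) := hmul
        _ = (1/2) * (q b * ∑ a, (p (a, b) / q b) * Real.log ((p (a, b) / q b) / r a)) := by
            ring
        _ = (1/2) * ∑ a, p (a, b) * Real.log (p (a, b) / (q b * r a)) := by rw [hS]
  -- Step 2: the KL sum equals log 2 * mutual information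
  have step2 : ∑ b, ∑ a, p (a, b) * Real.log (p (a, b) / (q b * r a))
      = Real.log 2 * mutInfo p := by
    have lhs_eq : ∀ a b, p (a, b) * Real.log (p (a, b) / (q b * r a))
        = p (a, b) * Real.log (p (a, b)) - p (a, b) * Real.log (q b)
          - p (a, b) * Real.log (r a) := by
      intro a b
      rcases eq_or_lt_of_le (hnn (a, b)) with hp0 | hp0
      · rw [← hp0]; ring
      · have hqb : 0 < q b := lt_of_lt_of_le hp0 (hple_q a b)
        have hra : 0 < r a := lt_of_lt_of_le hp0 (hple_r a b)
        rw [Real.log_div hp0.ne' (by positivity), Real.log_mul hqb.ne' hra.ne']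
        ring
    calc ∑ b, ∑ a, p (a, b) * Real.log (p (a, b) / (q b * r a))
        = ∑ b, ∑ a, (p (a, b) * Real.log (p (a, b)) - p (a, b) * Real.log (q b)
            - p (a, b) * Real.log (r a)) := by
          exact Finset.sum_congr rfl fun b _ => Finset.sum_congr rfl fun a _ => lhs_eq a b
      _ = (∑ b, ∑ a, p (a, b) * Real.log (p (a, b)))
          - (∑ b, q b * Real.log (q b)) - (∑ a, r a * Real.log (r a)) := by
          have e1 : ∑ b, ∑ a, p (a, b) * Real.log (q b) = ∑ b, q b * Real.log (q b) := by
            refine Finset.sum_congr rfl fun b _ => ?_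
            rw [← Finset.sum_mul]
          have e2 : ∑ b, ∑ a, p (a, b) * Real.log (r a) = ∑ a, r a * Real.log (r a) := by
            rw [Finset.sum_comm]
            refine Finset.sum_congr rfl fun a _ => ?_
            rw [← Finset.sum_mul]
          simp only [Finset.sum_sub_distrib]
          rw [e1, e2]
      _ = Real.log 2 * mutInfo p := by
          have hA := log2_mul_ent (fun a => ∑ b, p (a, b))
          have hB := log2_mul_ent (fun b => ∑ a, p (a, b))
          have hP := log2_mul_ent p
          rw [mutInfo, mul_sub, mul_add, hA, hB, hP, Fintype.sum_prod_type, Finset.sum_comm]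
          simp only [hqdef, hrdef]
          ring
  have goal_eq : ∑ b, (∑ a, p (a, b)) *
        hell (fun a => p (a, b) / ∑ a', p (a', b)) (fun a => ∑ b', p (a, b')) ^ 2
      = ∑ b, q b * hell (fun a => p (a, b) / q b) r ^ 2 := rfl
  rw [goal_eq]
  calc ∑ b, q b * hell (fun a => p (a, b) / q b) r ^ 2
      ≤ (1/2) * ∑ b, ∑ a, p (a, b) * Real.log (p (a, b) / (q b * r a)) := step1
    _ = (Real.log 2 / 2) * mutInfo p := by rw [step2]; ring
end

section
/- Let (Z, M) be jointly distributed random variables where Z is uniform on {0,1} and M takes values in a finite set. Let M|Z=0 and M|Z=1 denote the conditional distributions of M given Z = 0 and Z = 1, respectively. Then h(M|Z=0, M|Z=1)² ≤ 4 κ · I(Z : M). -/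
open Finset

lemma key_log (x y : ℝ) (hx : 0 ≤ x) (hy : 0 < y) :
    2*x - 2*Real.sqrt x * Real.sqrt y ≤ x * Real.log x - x * Real.log y := by
  rcases hx.eq_or_lt with h|h
  · simp [← h]
  · have ha : 0 < Real.sqrt x := Real.sqrt_pos.2 h
    have hb : 0 < Real.sqrt y := Real.sqrt_pos.2 hy
    have hxa : Real.sqrt x ^ 2 = x := Real.sq_sqrt hx
    have hyb : Real.sqrt y ^ 2 = y := Real.sq_sqrt hy.le
    have hlog : Real.log (Real.sqrt y / Real.sqrt x) ≤ Real.sqrt y / Real.sqrt x - 1 :=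
      Real.log_le_sub_one_of_pos (by positivity)
    rw [Real.log_div hb.ne' ha.ne'] at hlog
    have hlx : Real.log (Real.sqrt x) = Real.log x / 2 := Real.log_sqrt hx
    have hly : Real.log (Real.sqrt y) = Real.log y / 2 := Real.log_sqrt hy.le
    have h2 : 2*x*(Real.log (Real.sqrt y) - Real.log (Real.sqrt x)) ≤ 2*x*(Real.sqrt y/Real.sqrt x - 1) :=
      mul_le_mul_of_nonneg_left hlog (by positivity)
    have h3 : 2*x*(Real.sqrt y/Real.sqrt x - 1) = 2*Real.sqrt x*Real.sqrt y - 2*x := by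
      field_simp; linear_combination (-Real.sqrt y) * hxa
    nlinarith [h2, h3]

lemma pointwise_hell (x y : ℝ) (hx : 0 ≤ x) (hy : 0 ≤ y) :
    (1/2) * (Real.sqrt x - Real.sqrt y)^2
      ≤ x * Real.log x + y * Real.log y - (x + y) * Real.log ((x+y)/2) := by
  rcases eq_or_lt_of_le (by positivity : (0:ℝ) ≤ (x+y)/2) with hm|hm
  · have hx0 : x = 0 := by linarith
    have hy0 : y = 0 := by linarith
    simp [hx0, hy0]
  · have k0 := key_log x ((x+y)/2) hx hm
    have k1 := key_log y ((x+y)/2) hy hm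
    have hb : (Real.sqrt ((x+y)/2))^2 = (x+y)/2 := Real.sq_sqrt (by positivity)
    have hax : (Real.sqrt x)^2 = x := Real.sq_sqrt hx
    have hay : (Real.sqrt y)^2 = y := Real.sq_sqrt hy
    nlinarith [k0, k1, sq_nonneg (Real.sqrt x + Real.sqrt y - 2*Real.sqrt ((x+y)/2))]

lemma half_logb (p : ℝ) : (1/2)*p*Real.logb 2 ((1/2)*p) = (1/2)*(p*Real.logb 2 p - p) := by
  rcases eq_or_ne p 0 with h|h
  · simp [h]
  · have hh : Real.logb 2 ((1/2)*p) = Real.logb 2 p - 1 := by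
      rw [Real.logb_mul (by norm_num) h]
      have h2 : Real.logb 2 (1/2) = -1 := by
        rw [show (1/2:ℝ) = 2⁻¹ by norm_num, Real.logb_inv]
        simp
      rw [h2]; ring
    rw [hh]; ring


/-- for `Z` uniform on `{0,1}` jointly distributed with a finite
random variable `M` whose conditional laws given `Z = 0` and `Z = 1` are `p0`
and `p1`, one has `h(M|Z=0, M|Z=1)² ≤ 4κ · I(Z:M)` with `κ = (ln 2)/2`. -/
theorem hellinger_sq_le_mutInfo_of_uniform_bit {S : Type*} [Fintype S]
    (p0 p1 : S → ℝ)
    (h0nn : ∀ s, 0 ≤ p0 s) (h1nn : ∀ s, 0 ≤ p1 s)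
    (h0sum : ∑ s, p0 s = 1) (h1sum : ∑ s, p1 s = 1) :
    hell p0 p1 ^ 2
      ≤ 4 * (Real.log 2 / 2) *
          mutInfo (fun zm : Bool × S => (1/2) * (if zm.1 then p1 zm.2 else p0 zm.2)) := by
  classical
  set m : S → ℝ := fun s => (p0 s + p1 s)/2 with hmdef
  have hl2 : Real.log 2 ≠ 0 := ne_of_gt (Real.log_pos (by norm_num))
  -- marginal over B is constant 1/2
  have f1 : (fun z : Bool => ∑ s,
      (fun zm : Bool × S => (1/2) * (if zm.1 then p1 zm.2 else p0 zm.2)) (z, s))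
      = fun _ : Bool => (1/2 : ℝ) := by
    funext z
    cases z <;> simp only [if_true, if_false, Bool.false_eq_true, ite_false, ite_true] <;>
      rw [← Finset.mul_sum] <;> simp [h0sum, h1sum]
  have f2 : (fun s : S => ∑ z : Bool,
      (fun zm : Bool × S => (1/2) * (if zm.1 then p1 zm.2 else p0 zm.2)) (z, s))
      = m := by
    funext s
    rw [Fintype.sum_bool]
    simp only [if_true, if_false, Bool.false_eq_true, ite_false, ite_true, hmdef]
    ring
  have e1 : ent (fun _ : Bool => (1/2 : ℝ)) = 1 := by
    have h2 : Real.logb 2 (1/2 : ℝ) = -1 := by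
      rw [show (1/2:ℝ) = 2⁻¹ by norm_num, Real.logb_inv]; simp
    rw [ent, Fintype.sum_bool, h2]; norm_num
  have e3 : ent (fun zm : Bool × S => (1/2) * (if zm.1 then p1 zm.2 else p0 zm.2))
      = (1/2)*(ent p0 + ent p1) + 1 := by
    rw [ent, Fintype.sum_prod_type, Fintype.sum_bool]
    simp only [if_true, if_false, Bool.false_eq_true, ite_false, ite_true]
    have r1 : ∀ s : S, (1/2) * p1 s * Real.logb 2 ((1/2) * p1 s)
        = (1/2)*(p1 s*Real.logb 2 (p1 s) - p1 s) := fun s => half_logb (p1 s)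
    have r0 : ∀ s : S, (1/2) * p0 s * Real.logb 2 ((1/2) * p0 s)
        = (1/2)*(p0 s*Real.logb 2 (p0 s) - p0 s) := fun s => half_logb (p0 s)
    rw [Finset.sum_congr rfl (fun s _ => r1 s), Finset.sum_congr rfl (fun s _ => r0 s)]
    rw [ent, ent]
    have : ∀ q : S → ℝ, (∑ s, q s = 1) →
        ∑ s, (1/2)*(q s*Real.logb 2 (q s) - q s)
          = (1/2)*(∑ s, q s*Real.logb 2 (q s)) - 1/2 := by
      intro q hq
      rw [← Finset.mul_sum, Finset.sum_sub_distrib, hq]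
      ring
    rw [this p0 h0sum, this p1 h1sum]
    ring
  have hMI : mutInfo (fun zm : Bool × S => (1/2) * (if zm.1 then p1 zm.2 else p0 zm.2))
      = ∑ s, ((1/2)*(p0 s*Real.logb 2 (p0 s)) + (1/2)*(p1 s*Real.logb 2 (p1 s))
              - m s * Real.logb 2 (m s)) := by
    rw [mutInfo, f1, f2, e1, e3, ent, ent, ent]
    rw [Finset.sum_sub_distrib, Finset.sum_add_distrib, ← Finset.mul_sum, ← Finset.mul_sum]
    ring
  have hsumnn : 0 ≤ (1/2) * ∑ s, (Real.sqrt (p0 s) - Real.sqrt (p1 s))^2 := by positivity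
  calc hell p0 p1 ^ 2 = (1/2) * ∑ s, (Real.sqrt (p0 s) - Real.sqrt (p1 s))^2 := by
        rw [hell, Real.sq_sqrt hsumnn]
    _ = ∑ s, (1/2) * (Real.sqrt (p0 s) - Real.sqrt (p1 s))^2 := Finset.mul_sum _ _ _
    _ ≤ ∑ s, (p0 s * Real.log (p0 s) + p1 s * Real.log (p1 s)
            - (p0 s + p1 s) * Real.log ((p0 s + p1 s)/2)) :=
        Finset.sum_le_sum (fun s _ => pointwise_hell (p0 s) (p1 s) (h0nn s) (h1nn s))
    _ = 4 * (Real.log 2 / 2) *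
          mutInfo (fun zm : Bool × S => (1/2) * (if zm.1 then p1 zm.2 else p0 zm.2)) := by
        rw [hMI, Finset.mul_sum]
        refine Finset.sum_congr rfl (fun s _ => ?_)
        have hm : m s = (p0 s + p1 s)/2 := rfl
        rw [Real.logb, Real.logb, Real.logb, hm]
        field_simp
        ring
end
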